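/- For a GPC expansion f = ∑_𝐢 c_𝐢 Ψ_𝐢 over independent inputs, the first-order Sobol index of input X_k equals S_k = (∑_{𝐢 ∈ A_k} c_𝐢² E[Ψ_𝐢²]) / (∑_{𝐢 ≠ 0} c_𝐢² E[Ψ_𝐢²]), where A_k is the set of nonzero multi-indices 𝐢 with i_j = 0 for all j ≠ k. -/

import Mathlib

open MeasureTheory Polynomial ProbabilityTheory

open scoped Classical in
lemma stmt16_var_congr {Ω : Type*} [MeasurableSpace Ω] {μ : Measure Ω} {F G : Ω → ℝ}
    (h : F =ᵐ[μ] G) : variance F μ = variance G μ := by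
  unfold variance evariance
  rw [integral_congr_ae h]
  congr 1
  apply lintegral_congr_ae
  filter_upwards [h] with ω hω
  rw [hω]

open scoped Classical in
lemma stmt16_integral_prod {Ω ι : Type*} [MeasurableSpace Ω] {μ : Measure Ω}
    [IsProbabilityMeasure μ] {Y : ι → Ω → ℝ} (hmeas : ∀ i, Measurable (Y i))
    (hind : iIndepFun Y μ) (t : Finset ι) :
    ∫ ω, ∏ l ∈ t, Y l ω ∂μ = ∏ l ∈ t, ∫ ω, Y l ω ∂μ := by
  classical
  induction t using Finset.induction_on with
  | empty => simp
  | @insert a t' ha ih =>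
    have hprodmeas : Measurable (fun ω => ∏ l ∈ t', Y l ω) :=
      Finset.measurable_prod _ fun l _ => hmeas l
    have hI : IndepFun (fun ω => ∏ l ∈ t', Y l ω) (Y a) μ := by
      have h := hind.indepFun_finset_prod_of_notMem hmeas ha
      rwa [show (∏ j ∈ t', Y j) = fun ω => ∏ l ∈ t', Y l ω from
        funext fun ω => by simp] at h
    calc ∫ ω, ∏ l ∈ insert a t', Y l ω ∂μ
        = ∫ ω, Y a ω * ∏ l ∈ t', Y l ω ∂μ := by simp_rw [Finset.prod_insert ha]
      _ = (∫ ω, Y a ω ∂μ) * ∫ ω, ∏ l ∈ t', Y l ω ∂μ := by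
          have h := hI.symm.integral_mul_eq_mul_integral (hmeas a).aestronglyMeasurable
            hprodmeas.aestronglyMeasurable
          simpa [Pi.mul_apply] using h
      _ = ∏ l ∈ insert a t', ∫ ω, Y l ω ∂μ := by rw [ih, Finset.prod_insert ha]

open scoped Classical in
lemma stmt16_var_expansion {Ω ι : Type*} [DecidableEq ι] [MeasurableSpace Ω] (μ : Measure Ω)
    [IsProbabilityMeasure μ] (P : ι → Ω → ℝ) (z : ι) (c : ι → ℝ) (t : Finset ι)
    (hmeas : ∀ i, AEStronglyMeasurable (P i) μ)
    (hPP : ∀ i j, Integrable (fun ω => P i ω * P j ω) μ)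
    (horth : ∀ i j, i ≠ j → ∫ ω, P i ω * P j ω ∂μ = 0)
    (hmean : ∀ i, i ≠ z → ∫ ω, P i ω ∂μ = 0)
    (hz : ∀ ω, P z ω = 1) :
    variance (fun ω => ∑ i ∈ t, c i * P i ω) μ
      = ∑ i ∈ t.filter (fun i => i ≠ z), c i ^ 2 * ∫ ω, (P i ω) ^ 2 ∂μ := by
  classical
  have hP : ∀ i, Integrable (P i) μ := fun i =>
    (hPP i z).congr (Filter.Eventually.of_forall fun ω => by simp [hz])
  set F := fun ω => ∑ i ∈ t, c i * P i ω with hF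
  have hFmeas : AEStronglyMeasurable F μ :=
    Finset.aestronglyMeasurable_fun_sum _ fun i _ => (hmeas i).const_mul _
  have hsq : ∀ ω, F ω ^ 2 = ∑ i ∈ t, ∑ j ∈ t, (c i * c j) * (P i ω * P j ω) := by
    intro ω
    rw [sq, hF, Finset.sum_mul_sum]
    exact Finset.sum_congr rfl fun i _ => Finset.sum_congr rfl fun j _ => by ring
  have hF2 : Integrable (fun ω => F ω ^ 2) μ := by
    rw [show (fun ω => F ω ^ 2) = fun ω => ∑ i ∈ t, ∑ j ∈ t, (c i * c j) * (P i ω * P j ω)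
      from funext hsq]
    exact integrable_finset_sum _ fun i _ =>
      integrable_finset_sum _ fun j _ => (hPP i j).const_mul _
  have hMem : MemLp F 2 μ := (memLp_two_iff_integrable_sq hFmeas).2 hF2
  have hEF : ∫ ω, F ω ∂μ = if z ∈ t then c z else 0 := by
    rw [hF, integral_finset_sum _ (fun i _ => (hP i).const_mul _),
      ← Finset.sum_ite_eq' t z (fun _ => c z)]
    refine Finset.sum_congr rfl fun i hi => ?_
    rw [integral_const_mul]
    by_cases h : i = z
    · subst h; simp only [hz, if_pos rfl]
      simp
    · rw [hmean i h, if_neg h, mul_zero]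
  have hEF2 : ∫ ω, F ω ^ 2 ∂μ = ∑ i ∈ t, c i ^ 2 * ∫ ω, (P i ω) ^ 2 ∂μ := by
    simp_rw [hsq]
    rw [integral_finset_sum _ (fun i _ =>
      integrable_finset_sum _ fun j _ => (hPP i j).const_mul _)]
    refine Finset.sum_congr rfl fun i hi => ?_
    rw [integral_finset_sum _ (fun j _ => (hPP i j).const_mul _)]
    have hstep : ∀ j ∈ t, (∫ ω, (c i * c j) * (P i ω * P j ω) ∂μ)
        = if j = i then c i ^ 2 * ∫ ω, (P i ω) ^ 2 ∂μ else 0 := by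
      intro j hj
      rw [integral_const_mul]
      by_cases h : j = i
      · subst h
        rw [if_pos rfl, show (fun ω => P j ω * P j ω) = fun ω => (P j ω) ^ 2 from
          funext fun ω => (sq (P j ω)).symm]
        ring_nf
      · rw [horth i j (fun e => h e.symm), mul_zero, if_neg h]
    rw [Finset.sum_congr rfl hstep, Finset.sum_ite_eq' t i
      (fun _ => c i ^ 2 * ∫ ω, (P i ω) ^ 2 ∂μ), if_pos hi]
  have hpow : μ[F ^ 2] = ∫ ω, F ω ^ 2 ∂μ := by
    apply integral_congr_ae
    exact Filter.Eventually.of_forall fun ω => by simp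
  rw [variance_eq_sub hMem, hpow, hEF2, show μ[F] = ∫ ω, F ω ∂μ from rfl, hEF,
    ← Finset.sum_filter_add_sum_filter_not t (fun i => i ≠ z)
      (fun i => c i ^ 2 * ∫ ω, (P i ω) ^ 2 ∂μ),
    show t.filter (fun i => ¬ i ≠ z) = t.filter (fun i => i = z) from by simp,
    show (∑ x ∈ t.filter (fun i => i = z), c x ^ 2 * ∫ ω, (P x ω) ^ 2 ∂μ)
        = if z ∈ t then c z ^ 2 * ∫ ω, (P z ω) ^ 2 ∂μ else 0 from by
      rw [← Finset.sum_ite_eq' t z (fun x => c x ^ 2 * ∫ ω, (P x ω) ^ 2 ∂μ),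
        Finset.sum_filter]]
  by_cases hzt : z ∈ t
  · simp only [if_pos hzt, hz, one_pow]
    simp only [integral_const, probReal_univ, measure_univ, ENNReal.toReal_one, smul_eq_mul, mul_one]
    ring
  · simp [hzt]

open scoped Classical in
/-- For a finite GPC expansion `f = ∑_{𝐢 ∈ s} c_𝐢 Ψ_𝐢` over independent
inputs (tensor-product orthogonal polynomials with `Ψ_0 = 1`), the first-order
Sobol index of input `X k` equals
`S_k = (∑_{𝐢 ∈ A_k} c_𝐢² E[Ψ_𝐢²]) / (∑_{𝐢 ≠ 0} c_𝐢² E[Ψ_𝐢²])`,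
where `A_k` is the set of nonzero multi-indices `𝐢` with `i j = 0` for all
`j ≠ k`. -/
theorem stmt16 {Ω : Type*} [MeasurableSpace Ω] (μ : Measure Ω)
    [IsProbabilityMeasure μ] (d : ℕ) (X : Fin d → Ω → ℝ)
    (hX : ∀ k, Measurable (X k))
    (hindep : iIndepFun X μ)
    (Ψ : Fin d → ℕ → ℝ[X]) (hone : ∀ k, Ψ k 0 = 1)
    (hmom : ∀ q : Fin d → ℝ[X],
      Integrable (fun ω => ∏ k, (q k).eval (X k ω)) μ)
    (horth : ∀ k n m, n ≠ m →
      ∫ ω, (Ψ k n).eval (X k ω) * (Ψ k m).eval (X k ω) ∂μ = 0)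
    (hnorm : ∀ (i : Fin d → ℕ),
      0 < ∫ ω, (∏ k, (Ψ k (i k)).eval (X k ω)) ^ 2 ∂μ)
    (s : Finset (Fin d → ℕ)) (c : (Fin d → ℕ) → ℝ)
    (f : Ω → ℝ)
    (hfdef : ∀ ω, f ω = ∑ i ∈ s, c i * ∏ k, (Ψ k (i k)).eval (X k ω))
    (hvar : 0 < variance f μ) (k : Fin d) :
    variance (μ[f | MeasurableSpace.comap (X k) inferInstance]) μ /
        variance f μ =
      (∑ i ∈ s.filter (fun i => i ≠ (fun _ => 0) ∧ ∀ j, j ≠ k → i j = 0),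
          (c i) ^ 2 * ∫ ω, (∏ l, (Ψ l (i l)).eval (X l ω)) ^ 2 ∂μ) /
      (∑ i ∈ s.filter (fun i => i ≠ fun _ => 0),
          (c i) ^ 2 * ∫ ω, (∏ l, (Ψ l (i l)).eval (X l ω)) ^ 2 ∂μ) := by
  classical
  set z : Fin d → ℕ := fun _ => 0 with hzdef
  set Pf : (Fin d → ℕ) → Ω → ℝ := fun i ω => ∏ l, (Ψ l (i l)).eval (X l ω) with hPfdef
  set Q : (Fin d → ℕ) → Prop := fun i => ∀ j, j ≠ k → i j = 0 with hQdef
  set U : (Fin d → ℕ) → Ω → ℝ := fun i ω => (Ψ k (i k)).eval (X k ω) with hUdef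
  set V : (Fin d → ℕ) → Ω → ℝ :=
    fun i ω => ∏ l ∈ Finset.univ.erase k, (Ψ l (i l)).eval (X l ω) with hVdef
  have hpoly_meas : ∀ p : ℝ[X], Measurable fun x : ℝ => p.eval x :=
    fun p => p.continuous.measurable
  have hpm : ∀ (p : ℝ[X]) (l : Fin d), Measurable fun ω => p.eval (X l ω) :=
    fun p l => (hpoly_meas p).comp (hX l)
  have hq : ∀ (q : Fin d → ℝ[X]) (t : Finset (Fin d)),
      ∫ ω, ∏ l ∈ t, (q l).eval (X l ω) ∂μ = ∏ l ∈ t, ∫ ω, (q l).eval (X l ω) ∂μ := by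
    intro q t
    exact stmt16_integral_prod (fun l => hpm (q l) l)
      (hindep.comp (fun l x => (q l).eval x) (fun l => hpoly_meas (q l))) t
  have hmean0 : ∀ (l : Fin d) (n : ℕ), n ≠ 0 → ∫ ω, (Ψ l n).eval (X l ω) ∂μ = 0 := by
    intro l n hn
    have h := horth l n 0 hn
    simpa [hone l] using h
  have hmeanP : ∀ i, i ≠ z → ∫ ω, Pf i ω ∂μ = 0 := by
    intro i hi
    have hex : ∃ l, i l ≠ 0 := by
      by_contra h; push_neg at h; exact hi (funext h)
    obtain ⟨l0, hl0⟩ := hex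
    rw [show (fun ω => Pf i ω) = fun ω => ∏ l, (Ψ l (i l)).eval (X l ω) from rfl,
      hq (fun l => Ψ l (i l)) Finset.univ]
    exact Finset.prod_eq_zero (Finset.mem_univ l0) (hmean0 l0 (i l0) hl0)
  have hPP : ∀ i j, Integrable (fun ω => Pf i ω * Pf j ω) μ := by
    intro i j
    refine (hmom (fun l => Ψ l (i l) * Ψ l (j l))).congr
      (Filter.Eventually.of_forall fun ω => ?_)
    simp [hPfdef, Polynomial.eval_mul, Finset.prod_mul_distrib]
  have horthP : ∀ i j, i ≠ j → ∫ ω, Pf i ω * Pf j ω ∂μ = 0 := by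
    intro i j hij
    have heq : (fun ω => Pf i ω * Pf j ω)
        = fun ω => ∏ l, (Ψ l (i l) * Ψ l (j l)).eval (X l ω) := by
      funext ω; simp [hPfdef, Polynomial.eval_mul, Finset.prod_mul_distrib]
    rw [heq, hq (fun l => Ψ l (i l) * Ψ l (j l)) Finset.univ]
    obtain ⟨l0, hl0⟩ := Function.ne_iff.mp hij
    refine Finset.prod_eq_zero (Finset.mem_univ l0) ?_
    have h := horth l0 (i l0) (j l0) hl0
    simpa [Polynomial.eval_mul] using h
  have hPz : ∀ ω, Pf z ω = 1 := fun ω => by simp [hPfdef, hzdef, hone]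
  have hPmeas : ∀ i, AEStronglyMeasurable (Pf i) μ := fun i =>
    (Finset.measurable_prod Finset.univ fun l _ => hpm (Ψ l (i l)) l).aestronglyMeasurable
  have hPint : ∀ i, Integrable (Pf i) μ := fun i => hmom _
  have hDen : variance f μ
      = ∑ i ∈ s.filter (fun i => i ≠ z), c i ^ 2 * ∫ ω, (Pf i ω) ^ 2 ∂μ := by
    rw [show f = fun ω => ∑ i ∈ s, c i * Pf i ω from funext hfdef]
    exact stmt16_var_expansion μ Pf z c s hPmeas hPP horthP hmeanP hPz
  have hmle : MeasurableSpace.comap (X k) inferInstance ≤ (inferInstance : MeasurableSpace Ω) :=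
    (hX k).comap_le
  have hUV : ∀ i ω, Pf i ω = U i ω * V i ω := fun i ω =>
    (Finset.mul_prod_erase Finset.univ (fun l => (Ψ l (i l)).eval (X l ω))
      (Finset.mem_univ k)).symm
  have hVmeas : ∀ i, Measurable (V i) := fun i =>
    Finset.measurable_prod _ fun l _ => hpm (Ψ l (i l)) l
  have hVint : ∀ i, Integrable (V i) μ := by
    intro i
    refine (hmom (fun l => if l = k then 1 else Ψ l (i l))).congr
      (Filter.Eventually.of_forall fun ω => ?_)
    show (∏ l, ((if l = k then 1 else Ψ l (i l)) : ℝ[X]).eval (X l ω)) = V i ω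
    rw [← Finset.mul_prod_erase Finset.univ
      (fun l => ((if l = k then 1 else Ψ l (i l)) : ℝ[X]).eval (X l ω)) (Finset.mem_univ k),
      if_pos rfl, Polynomial.eval_one, one_mul]
    exact Finset.prod_congr rfl fun l hl => by rw [if_neg (Finset.ne_of_mem_erase hl)]
  have hVval : ∀ i, ∫ ω, V i ω ∂μ
      = ∏ l ∈ Finset.univ.erase k, ∫ ω, (Ψ l (i l)).eval (X l ω) ∂μ :=
    fun i => hq (fun l => Ψ l (i l)) (Finset.univ.erase k)
  have hV1 : ∀ i, Q i → ∀ ω, V i ω = 1 := by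
    intro i hQi ω
    refine Finset.prod_eq_one fun l hl => ?_
    rw [hQi l (Finset.ne_of_mem_erase hl), hone, Polynomial.eval_one]
  have hV0 : ∀ i, ¬ Q i → ∫ ω, V i ω ∂μ = 0 := by
    intro i hQi
    rw [hVval]
    simp only [hQdef] at hQi
    push_neg at hQi
    obtain ⟨j, hjk, hij⟩ := hQi
    exact Finset.prod_eq_zero (Finset.mem_erase.mpr ⟨hjk, Finset.mem_univ j⟩)
      (hmean0 j (i j) hij)
  haveI : SigmaFinite (μ.trim hmle) := inferInstance
  have hcond : μ[f|MeasurableSpace.comap (X k) inferInstance]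
      =ᵐ[μ] fun ω => ∑ i ∈ s.filter Q, c i * Pf i ω := by
    have hfsum : f = ∑ i ∈ s, (fun ω => c i * Pf i ω) := by
      funext ω; rw [hfdef]; simp [hPfdef]
    have h1 : μ[f|MeasurableSpace.comap (X k) inferInstance]
        =ᵐ[μ] ∑ i ∈ s, μ[(fun ω => c i * Pf i ω)|MeasurableSpace.comap (X k) inferInstance] := by
      rw [hfsum]; exact condExp_finsetSum (fun i _ => (hPint i).const_mul _) _
    have hterm : ∀ i, μ[(fun ω => c i * Pf i ω)|MeasurableSpace.comap (X k) inferInstance]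
        =ᵐ[μ] fun ω => c i * (U i ω * ∫ ω', V i ω' ∂μ) := by
      intro i
      have hXm : Measurable[MeasurableSpace.comap (X k) inferInstance] (X k) :=
        Measurable.of_comap_le le_rfl
      have hsm : StronglyMeasurable[MeasurableSpace.comap (X k) inferInstance] (U i) :=
        ((hpoly_meas (Ψ k (i k))).comp hXm).stronglyMeasurable
      have hUVi : Integrable (U i * V i) μ :=
        (hPint i).congr (Filter.Eventually.of_forall fun ω => hUV i ω)
      have hmul := condExp_mul_of_stronglyMeasurable_left hsm hUVi (hVint i)
      have hIF : IndepFun (V i) (X k) μ := by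
        set g : Fin d → ℝ → ℝ := fun l => if l = k then id else fun x => (Ψ l (i l)).eval x
          with hgdef
        have hgmeas : ∀ l, Measurable (g l) := by
          intro l
          by_cases h : l = k
          · simp only [hgdef, if_pos h]; exact measurable_id
          · simp only [hgdef, if_neg h]; exact hpoly_meas _
        have hZ := (hindep.comp g hgmeas).indepFun_finset_prod_of_notMem
          (fun l => (hgmeas l).comp (hX l)) (Finset.notMem_erase k Finset.univ)
        have e1 : (∏ j ∈ Finset.univ.erase k, (g j ∘ X j)) = V i := by
          funext ω
          simp only [Finset.prod_apply, Function.comp_apply]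
          refine Finset.prod_congr rfl fun l hl => ?_
          simp [hgdef, if_neg (Finset.ne_of_mem_erase hl)]
        have e2 : (g k ∘ X k) = X k := by funext ω; simp [hgdef]
        rwa [e1, e2] at hZ
      have hindp : Indep (MeasurableSpace.comap (V i) inferInstance)
          (MeasurableSpace.comap (X k) inferInstance) μ :=
        (IndepFun_iff_Indep (V i) (X k) μ).mp hIF
      have hVsm : StronglyMeasurable[MeasurableSpace.comap (V i) inferInstance] (V i) :=
        (Measurable.of_comap_le le_rfl).stronglyMeasurable
      have hVle : MeasurableSpace.comap (V i) inferInstance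
          ≤ (inferInstance : MeasurableSpace Ω) := (hVmeas i).comap_le
      have hVcond : μ[V i|MeasurableSpace.comap (X k) inferInstance]
          =ᵐ[μ] fun _ => ∫ ω', V i ω' ∂μ :=
        condExp_indep_eq hVle hmle hVsm hindp
      have h2 : μ[U i * V i|MeasurableSpace.comap (X k) inferInstance]
          =ᵐ[μ] fun ω => U i ω * ∫ ω', V i ω' ∂μ := by
        refine hmul.trans ?_
        filter_upwards [hVcond] with ω hω
        simp only [Pi.mul_apply, hω]
      have hHsm : (fun ω => c i * Pf i ω) = c i • (U i * V i) := by
        funext ω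
        simp only [Pi.smul_apply, Pi.mul_apply, smul_eq_mul, hUV i ω]
      rw [hHsm]
      refine (condExp_smul (c i) (U i * V i) _).trans ?_
      filter_upwards [h2] with ω hω
      simp only [Pi.smul_apply, hω, smul_eq_mul]
    have hsum2 : (∑ i ∈ s, μ[(fun ω => c i * Pf i ω)|MeasurableSpace.comap (X k) inferInstance])
        =ᵐ[μ] fun ω => ∑ i ∈ s, c i * (U i ω * ∫ ω', V i ω' ∂μ) := by
      have hball : ∀ᵐ ω ∂μ, ∀ i ∈ s,
          (μ[(fun ω' => c i * Pf i ω')|MeasurableSpace.comap (X k) inferInstance]) ω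
          = c i * (U i ω * ∫ ω', V i ω' ∂μ) :=
        (ae_ball_iff s.countable_toSet).2 fun i _ => hterm i
      filter_upwards [hball] with ω hω
      rw [Finset.sum_apply]
      exact Finset.sum_congr rfl fun i hi => hω i hi
    refine h1.trans (hsum2.trans (Filter.Eventually.of_forall fun ω => ?_))
    simp only [hQdef]
    rw [Finset.sum_filter]
    refine Finset.sum_congr rfl fun i hi => ?_
    by_cases hQi : Q i
    · rw [if_pos hQi,
        show (∫ ω', V i ω' ∂μ) = 1 from by
          rw [show (fun ω' => V i ω') = fun _ => (1 : ℝ) from funext (hV1 i hQi)]; simp,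
        mul_one, hUV i ω, hV1 i hQi ω, mul_one]
    · rw [if_neg hQi, hV0 i hQi, mul_zero, mul_zero]
  have hNum : variance (μ[f|MeasurableSpace.comap (X k) inferInstance]) μ
      = ∑ i ∈ (s.filter Q).filter (fun i => i ≠ z), c i ^ 2 * ∫ ω, (Pf i ω) ^ 2 ∂μ := by
    rw [stmt16_var_congr hcond]
    exact stmt16_var_expansion μ Pf z c (s.filter Q) hPmeas hPP horthP hmeanP hPz
  rw [hNum, hDen]
  congr 1
  · refine Finset.sum_congr ?_ fun i _ => rfl
    ext i
    simp only [Finset.mem_filter, hQdef, hzdef]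
    tauto
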